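/- Let ρ_1,…,ρ_N be LDOI positive semidefinite matrices indexed by pairs, let p_1,…,p_N be nonnegative reals, and let (P_1,…,P_N) be a POVM in which every P_k is separable. Then (Φ(P_1),…,Φ(P_N)) is also a POVM in which every Φ(P_k) is separable, each Φ(P_k) is LDOI, and the success probability is unchanged: ∑_{k=1}^N p_k · Tr(Φ(P_k) ρ_k) = ∑_{k=1}^N p_k · Tr(P_k ρ_k). -/

import Mathlib

open Matrix Kronecker BigOperators
open scoped ComplexOrder

/-- The diagonal sign matrix `O_ε` with diagonal entries `±1` determined by `ε`. -/
noncomputable def signDiag (n : ℕ) (ε : Fin n → Bool) : Matrix (Fin n) (Fin n) ℂ :=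
  Matrix.diagonal (fun i => if ε i then 1 else -1)

/-- The local diagonal orthogonal twirl
`Φ(A) = 2⁻ⁿ ∑_ε (O_ε ⊗ O_ε) A (O_ε ⊗ O_ε)`. -/
noncomputable def twirl {n : ℕ} (A : Matrix (Fin n × Fin n) (Fin n × Fin n) ℂ) :
    Matrix (Fin n × Fin n) (Fin n × Fin n) ℂ :=
  ((2 : ℂ) ^ n)⁻¹ • ∑ ε : Fin n → Bool,
    (signDiag n ε ⊗ₖ signDiag n ε) * A * (signDiag n ε ⊗ₖ signDiag n ε)

/-- The partial transpose on the first factor: `T₁(M)_{(i,k),(j,l)} = M_{(j,k),(i,l)}`. -/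
def ptranspose {n : ℕ} (M : Matrix (Fin n × Fin n) (Fin n × Fin n) ℂ) :
    Matrix (Fin n × Fin n) (Fin n × Fin n) ℂ :=
  Matrix.of fun p q => M (q.1, p.2) (p.1, q.2)

/-- A matrix on `ℂⁿ ⊗ ℂⁿ` is separable if it is a finite sum of Kronecker products of
positive semidefinite `n × n` matrices. -/
def SepOp {n : ℕ} (M : Matrix (Fin n × Fin n) (Fin n × Fin n) ℂ) : Prop :=
  ∃ (N : ℕ) (Q R : Fin N → Matrix (Fin n) (Fin n) ℂ),
    (∀ t, (Q t).PosSemidef) ∧ (∀ t, (R t).PosSemidef) ∧ M = ∑ t, Q t ⊗ₖ R t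

/-! ### Auxiliary lemmas -/

section Aux

variable {n : ℕ}

lemma kron_conjTranspose {m : Type*} [Fintype m] (A B : Matrix m m ℂ) :
    (A ⊗ₖ B)ᴴ = Aᴴ ⊗ₖ Bᴴ := by
  ext ⟨i, k⟩ ⟨j, l⟩
  simp [Matrix.conjTranspose_apply, star_mul', mul_comm]

lemma signDiag_mul (ε δ : Fin n → Bool) :
    signDiag n ε * signDiag n δ = signDiag n (fun i => ε i == δ i) := by
  have h : (fun i => (if ε i then (1:ℂ) else -1) * (if δ i then (1:ℂ) else -1))
      = fun i => if ε i == δ i then (1:ℂ) else -1 := by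
    funext i; cases ε i <;> cases δ i <;> norm_num
  rw [signDiag, signDiag, signDiag, Matrix.diagonal_mul_diagonal, h]

lemma signDiag_mul_self (ε : Fin n → Bool) : signDiag n ε * signDiag n ε = 1 := by
  rw [signDiag_mul]
  have h : (fun i => ε i == ε i) = fun _ : Fin n => true := by
    funext i; exact beq_self_eq_true _
  rw [h]
  simp [signDiag]

lemma signDiag_conjTranspose (ε : Fin n → Bool) : (signDiag n ε)ᴴ = signDiag n ε := by
  have h : (star fun i => if ε i then (1:ℂ) else -1) = fun i => if ε i then (1:ℂ) else -1 := by
    funext i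
    simp only [Pi.star_apply]
    cases ε i <;> simp
  rw [signDiag, Matrix.diagonal_conjTranspose, h]

/-- Abbreviation for the local sign unitary. -/
noncomputable def sU (n : ℕ) (ε : Fin n → Bool) : Matrix (Fin n × Fin n) (Fin n × Fin n) ℂ :=
  signDiag n ε ⊗ₖ signDiag n ε

lemma sU_conjTranspose (ε : Fin n → Bool) : (sU n ε)ᴴ = sU n ε := by
  rw [sU, kron_conjTranspose, signDiag_conjTranspose]

lemma sU_mul (ε δ : Fin n → Bool) :
    sU n ε * sU n δ = sU n (fun i => ε i == δ i) := by
  rw [sU, sU, sU, ← Matrix.mul_kronecker_mul, signDiag_mul]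

lemma sU_mul_self (ε : Fin n → Bool) : sU n ε * sU n ε = 1 := by
  rw [sU, ← Matrix.mul_kronecker_mul, signDiag_mul_self, Matrix.one_kronecker_one]

lemma twirl_eq (A : Matrix (Fin n × Fin n) (Fin n × Fin n) ℂ) :
    twirl A = ((2 : ℂ) ^ n)⁻¹ • ∑ ε : Fin n → Bool, sU n ε * A * sU n ε := rfl

lemma two_pow_ne_zero : ((2 : ℂ) ^ n) ≠ 0 := by positivity

lemma card_bool_fun : (Fintype.card (Fin n → Bool) : ℂ) = 2 ^ n := by
  simp [Fintype.card_fun]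

lemma twirl_one : twirl (1 : Matrix (Fin n × Fin n) (Fin n × Fin n) ℂ) = 1 := by
  rw [twirl_eq]
  have h : ∀ ε : Fin n → Bool, sU n ε * (1 : Matrix (Fin n × Fin n) (Fin n × Fin n) ℂ) * sU n ε
      = 1 := by
    intro ε; rw [mul_one, sU_mul_self]
  rw [Finset.sum_congr rfl (fun ε _ => h ε), Finset.sum_const, Finset.card_univ,
    ← Nat.cast_smul_eq_nsmul ℂ, smul_smul, card_bool_fun, inv_mul_cancel₀ two_pow_ne_zero, one_smul]

lemma twirl_sum {ι : Type*} (s : Finset ι) (f : ι → Matrix (Fin n × Fin n) (Fin n × Fin n) ℂ) :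
    twirl (∑ k ∈ s, f k) = ∑ k ∈ s, twirl (f k) := by
  simp only [twirl_eq, Finset.mul_sum, Finset.sum_mul]
  rw [Finset.sum_comm, Finset.smul_sum]

lemma smul_posSemidef {m : Type*} [Fintype m] {M : Matrix m m ℂ} (hM : M.PosSemidef)
    {c : ℂ} (hc : 0 ≤ c) : (c • M).PosSemidef := by
  have hcr : (starRingEnd ℂ) c = c := by
    rw [Complex.conj_eq_iff_im]
    exact (Complex.nonneg_iff.mp hc).2.symm
  constructor
  · unfold Matrix.IsHermitian
    rw [Matrix.conjTranspose_smul, hM.1]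
    simp [hcr]
  · intro x
    exact (Matrix.PosSemidef.smul hM hc).2 x

lemma inv_two_pow_nonneg : (0 : ℂ) ≤ ((2 : ℂ) ^ n)⁻¹ := by
  have h : ((2 : ℂ) ^ n)⁻¹ = ((((2 : ℝ) ^ n)⁻¹ : ℝ) : ℂ) := by push_cast; ring
  rw [h, Complex.zero_le_real]
  positivity

lemma twirl_posSemidef {A : Matrix (Fin n × Fin n) (Fin n × Fin n) ℂ} (hA : A.PosSemidef) :
    (twirl A).PosSemidef := by
  rw [twirl_eq]
  refine smul_posSemidef ?_ inv_two_pow_nonneg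
  refine Finset.sum_induction _ _ (fun a b ha hb => ha.add hb) Matrix.PosSemidef.zero ?_
  intro ε _
  have := hA.mul_mul_conjTranspose_same (sU n ε)
  rwa [sU_conjTranspose] at this

lemma twirl_twirl (A : Matrix (Fin n × Fin n) (Fin n × Fin n) ℂ) :
    twirl (twirl A) = twirl A := by
  simp only [twirl_eq]
  rw [Finset.smul_sum]
  simp only [Matrix.mul_smul, Matrix.smul_mul, ← Finset.smul_sum, smul_smul]
  simp only [Finset.mul_sum, Finset.sum_mul]
  have key : ∀ δ : Fin n → Bool,
      ∑ ε : Fin n → Bool, sU n δ * (sU n ε * A * sU n ε) * sU n δ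
        = ∑ η : Fin n → Bool, sU n η * A * sU n η := by
    intro δ
    set g : (Fin n → Bool) → (Fin n → Bool) := fun ε i => ε i == δ i with hg
    have hinv : Function.Involutive g := by
      intro ε
      funext i
      show ((ε i == δ i) == δ i) = ε i
      cases ε i <;> cases δ i <;> rfl
    apply Fintype.sum_equiv (Function.Involutive.toPerm g hinv)
    intro ε
    have hf : (fun i => δ i == ε i) = g ε := by
      funext i
      show (δ i == ε i) = (ε i == δ i)
      cases ε i <;> cases δ i <;> rfl
    have h1 : sU n δ * sU n ε = sU n (g ε) := by
      rw [sU_mul, hf]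
    have h2 : sU n ε * sU n δ = sU n (g ε) := by
      rw [sU_mul]
    have hp : (Function.Involutive.toPerm g hinv) ε = g ε := rfl
    rw [hp]
    calc sU n δ * (sU n ε * A * sU n ε) * sU n δ
        = (sU n δ * sU n ε) * A * (sU n ε * sU n δ) := by
          simp only [Matrix.mul_assoc]
      _ = sU n (g ε) * A * sU n (g ε) := by rw [h1, h2]
  rw [Finset.sum_congr rfl (fun δ _ => key δ), Finset.sum_const, Finset.card_univ,
    ← Nat.cast_smul_eq_nsmul ℂ, smul_smul, card_bool_fun]
  congr 1
  rw [mul_assoc, inv_mul_cancel₀ two_pow_ne_zero, mul_one]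

lemma twirl_trace_mul (A B : Matrix (Fin n × Fin n) (Fin n × Fin n) ℂ) :
    (twirl A * B).trace = (A * twirl B).trace := by
  simp only [twirl_eq, Matrix.smul_mul, Matrix.mul_smul, Matrix.trace_smul,
    Finset.sum_mul, Finset.mul_sum, Matrix.trace_sum]
  congr 1
  apply Finset.sum_congr rfl
  intro ε _
  rw [show sU n ε * A * sU n ε * B = sU n ε * (A * (sU n ε * B)) by
    simp only [Matrix.mul_assoc], Matrix.trace_mul_comm]
  simp only [Matrix.mul_assoc]

lemma twirl_sep {A : Matrix (Fin n × Fin n) (Fin n × Fin n) ℂ} (hA : SepOp A) :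
    SepOp (twirl A) := by
  obtain ⟨m, Q, R, hQ, hR, rfl⟩ := hA
  set c : ℂ := ((2 : ℂ) ^ n)⁻¹ with hc
  set e := Fintype.equivFin (Fin m × (Fin n → Bool)) with he
  refine ⟨Fintype.card (Fin m × (Fin n → Bool)),
    fun j => c • (signDiag n (e.symm j).2 * Q (e.symm j).1 * signDiag n (e.symm j).2),
    fun j => signDiag n (e.symm j).2 * R (e.symm j).1 * signDiag n (e.symm j).2,
    ?_, ?_, ?_⟩
  · intro j
    refine smul_posSemidef ?_ inv_two_pow_nonneg
    have := (hQ (e.symm j).1).mul_mul_conjTranspose_same (signDiag n (e.symm j).2)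
    rwa [signDiag_conjTranspose] at this
  · intro j
    have := (hR (e.symm j).1).mul_mul_conjTranspose_same (signDiag n (e.symm j).2)
    rwa [signDiag_conjTranspose] at this
  · have := Equiv.sum_comp e.symm (fun x : Fin m × (Fin n → Bool) =>
      (c • (signDiag n x.2 * Q x.1 * signDiag n x.2)) ⊗ₖ
        (signDiag n x.2 * R x.1 * signDiag n x.2))
    rw [twirl_sum]
    rw [show (∑ j, (c • (signDiag n (e.symm j).2 * Q (e.symm j).1 * signDiag n (e.symm j).2)) ⊗ₖ
        (signDiag n (e.symm j).2 * R (e.symm j).1 * signDiag n (e.symm j).2)) = _ from this]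
    rw [Fintype.sum_prod_type]
    apply Finset.sum_congr rfl
    intro t _
    rw [twirl_eq, Finset.smul_sum]
    apply Finset.sum_congr rfl
    intro ε _
    rw [Matrix.smul_kronecker, sU, Matrix.mul_kronecker_mul, Matrix.mul_kronecker_mul]

end Aux

/-- Twirling a separable POVM for an ensemble of LDOI states gives a separable POVM
consisting of LDOI operators with the same success probability. -/
theorem twirl_sep_povm (n N : ℕ) (hn : 2 ≤ n)
    (ρ : Fin N → Matrix (Fin n × Fin n) (Fin n × Fin n) ℂ)
    (hρpsd : ∀ k, (ρ k).PosSemidef) (hρldoi : ∀ k, twirl (ρ k) = ρ k)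
    (p : Fin N → ℝ) (hp : ∀ k, 0 ≤ p k)
    (P : Fin N → Matrix (Fin n × Fin n) (Fin n × Fin n) ℂ)
    (hPpsd : ∀ k, (P k).PosSemidef) (hPsum : ∑ k, P k = 1)
    (hPsep : ∀ k, SepOp (P k)) :
    (∑ k, twirl (P k) = 1) ∧
    (∀ k, (twirl (P k)).PosSemidef) ∧
    (∀ k, SepOp (twirl (P k))) ∧
    (∀ k, twirl (twirl (P k)) = twirl (P k)) ∧
    (∑ k, (p k : ℂ) * (twirl (P k) * ρ k).trace = ∑ k, (p k : ℂ) * (P k * ρ k).trace) := by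
  refine ⟨?_, fun k => twirl_posSemidef (hPpsd k), fun k => twirl_sep (hPsep k),
    fun k => twirl_twirl (P k), ?_⟩
  · rw [← twirl_sum, hPsum, twirl_one]
  · apply Finset.sum_congr rfl
    intro k _
    rw [twirl_trace_mul, hρldoi]
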